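/- Let q(z) = 1/(2(1−z)) and y(s) = 1 − √(1−s) on [0,1]. For ν large, let t_ν ∈ (0,1) satisfy y'(t_ν) = ν, i.e. t_ν = 1 − 1/(4ν²). Define φ_ν(1) = 1, φ_ν'(τ) = y'(τ)/ν on [t_ν,1] and 1 elsewhere, so φ_ν(τ) = 1 + (y(τ)−1)/ν on [t_ν,1] and φ_ν(τ) = φ_ν(t_ν) + τ − t_ν on [0,t_ν]. Then φ_ν(0) ≤ 0, φ_ν is strictly increasing, and the function y_ν(s) := 1 + ν(s−1) on [φ_ν(t_ν), 1] and y_ν(s) := y(s + t_ν − φ_ν(t_ν)) on [0, φ_ν(t_ν)] is Lipschitz with y_ν(1) = 1, satisfies y_ν'(s) ≤ q(y_ν(s)) a.e., and y_ν → y in W^{1,1}([0,1]) as ν → +∞. -/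

import Mathlib

open MeasureTheory Set Filter Topology

set_option maxHeartbeats 1000000

lemma stmt17_sqrt_add_le (a b : ℝ) (ha : 0 ≤ a) (hb : 0 ≤ b) :
    Real.sqrt (a + b) ≤ Real.sqrt a + Real.sqrt b := by
  refine Real.sqrt_le_iff.2 ⟨by positivity, ?_⟩
  nlinarith [Real.sq_sqrt ha, Real.sq_sqrt hb,
    mul_nonneg (Real.sqrt_nonneg a) (Real.sqrt_nonneg b)]

lemma stmt17_inv_sqrt (t : ℝ) :
    1 / (2 * Real.sqrt t) = (1 / 2) * t ^ (-(1 / 2) : ℝ) := by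
  rcases le_or_gt 0 t with h | h
  · rw [Real.rpow_neg h, ← Real.sqrt_eq_rpow, one_div, mul_inv]
    norm_num
  · have h1 : Real.sqrt t = 0 := Real.sqrt_eq_zero_of_nonpos h.le
    rw [Real.rpow_def_of_neg h, show (-(1 / 2) : ℝ) * Real.pi = -(Real.pi / 2) by ring,
      Real.cos_neg, Real.cos_pi_div_two, mul_zero, h1, mul_zero]
    simp

lemma stmt17_deriv (d x : ℝ) (h : (1 : ℝ) - x - d ≠ 0) :
    HasDerivAt (fun s : ℝ => 1 - Real.sqrt (1 - s - d))
      (1 / (2 * Real.sqrt (1 - x - d))) x := by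
  have h1 : HasDerivAt (fun s : ℝ => 1 - s - d) (-1) x := by
    simpa using ((hasDerivAt_id x).const_sub 1).sub_const d
  have h2 := (h1.sqrt h).const_sub 1
  refine h2.congr_deriv ?_
  ring

lemma stmt17_deriv2 (x : ℝ) (h : (1 : ℝ) - x ≠ 0) :
    HasDerivAt (fun s : ℝ => -Real.sqrt (1 - s)) (1 / (2 * Real.sqrt (1 - x))) x := by
  have h1 : HasDerivAt (fun s : ℝ => 1 - s) (-1) x := by
    simpa using (hasDerivAt_id x).const_sub 1
  have h2 := (h1.sqrt h).neg
  refine h2.congr_deriv ?_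
  ring

lemma stmt17_core (y : ℝ → ℝ) (tν c : ℝ → ℝ) (Y Yd : ℝ → ℝ → ℝ)
    (hy : ∀ s, y s = 1 - Real.sqrt (1 - s))
    (htν : ∀ ν, tν ν = 1 - 1 / (4 * ν ^ 2))
    (hc : ∀ ν, c ν = 1 + (y (tν ν) - 1) / ν)
    (hY : ∀ ν s, Y ν s =
      if s ≤ c ν then y (s + tν ν - c ν) else 1 + ν * (s - 1))
    (hYd : ∀ ν s, Yd ν s =
      if s ≤ c ν then 1 / (2 * Real.sqrt (1 - (s + tν ν - c ν))) else ν)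
    (ν : ℝ) (hν : 1 ≤ ν) :
    Real.sqrt (1 / (4 * ν ^ 2)) = 1 / (2 * ν) ∧
    c ν = 1 - 2 * (1 / (4 * ν ^ 2)) ∧
    (∀ s, Y ν s = if s ≤ c ν then 1 - Real.sqrt (1 - s - 1 / (4 * ν ^ 2))
      else 1 + ν * (s - 1)) ∧
    (∀ s, Yd ν s = if s ≤ c ν then 1 / (2 * Real.sqrt (1 - s - 1 / (4 * ν ^ 2)))
      else ν) := by
  have hν0 : (0 : ℝ) < ν := by linarith
  have hsd : Real.sqrt (1 / (4 * ν ^ 2)) = 1 / (2 * ν) := by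
    rw [show 1 / (4 * ν ^ 2) = (1 / (2 * ν)) ^ 2 by field_simp; ring]
    exact Real.sqrt_sq (by positivity)
  have hcv : c ν = 1 - 2 * (1 / (4 * ν ^ 2)) := by
    rw [hc, htν, hy, show (1 : ℝ) - (1 - 1 / (4 * ν ^ 2)) = 1 / (4 * ν ^ 2) by ring, hsd]
    field_simp
    ring
  refine ⟨hsd, hcv, fun s => ?_, fun s => ?_⟩
  · rw [hY ν s]
    by_cases h : s ≤ c ν
    · rw [if_pos h, if_pos h, hy, htν, hcv,
        show (1 : ℝ) - (s + (1 - 1 / (4 * ν ^ 2)) - (1 - 2 * (1 / (4 * ν ^ 2))))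
          = 1 - s - 1 / (4 * ν ^ 2) by ring]
    · rw [if_neg h, if_neg h]
  · rw [hYd ν s]
    by_cases h : s ≤ c ν
    · rw [if_pos h, if_pos h, htν, hcv,
        show (1 : ℝ) - (s + (1 - 1 / (4 * ν ^ 2)) - (1 - 2 * (1 / (4 * ν ^ 2))))
          = 1 - s - 1 / (4 * ν ^ 2) by ring]
    · rw [if_neg h, if_neg h]

lemma stmt17_part1 (y q : ℝ → ℝ) (tν c : ℝ → ℝ) (φ Y Yd : ℝ → ℝ → ℝ)
    (hy : ∀ s, y s = 1 - Real.sqrt (1 - s))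
    (hq : ∀ z, q z = 1 / (2 * (1 - z)))
    (htν : ∀ ν, tν ν = 1 - 1 / (4 * ν ^ 2))
    (hc : ∀ ν, c ν = 1 + (y (tν ν) - 1) / ν)
    (hφ : ∀ ν τ, φ ν τ =
      if τ ≤ tν ν then c ν + τ - tν ν else 1 + (y τ - 1) / ν)
    (hY : ∀ ν s, Y ν s =
      if s ≤ c ν then y (s + tν ν - c ν) else 1 + ν * (s - 1))
    (hYd : ∀ ν s, Yd ν s =
      if s ≤ c ν then 1 / (2 * Real.sqrt (1 - (s + tν ν - c ν))) else ν)
    (ν : ℝ) (hν : 1 ≤ ν) :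
      φ ν 0 ≤ 0 ∧
      StrictMonoOn (φ ν) (Icc (0:ℝ) 1) ∧
      LipschitzOnWith (Real.toNNReal ν) (Y ν) (Icc (0:ℝ) 1) ∧
      Y ν 1 = 1 ∧
      (∀ᵐ s ∂(volume.restrict (Icc (0:ℝ) 1)), Yd ν s ≤ q (Y ν s)) := by
  obtain ⟨hsd, hcv, hYs, hYds⟩ := stmt17_core y tν c Y Yd hy htν hc hY hYd ν hν
  have hν0 : (0 : ℝ) < ν := by linarith
  set d : ℝ := 1 / (4 * ν ^ 2) with hd
  have hd0 : 0 < d := by rw [hd]; positivity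
  have hd4 : d ≤ 1 / 4 := by
    rw [hd]
    apply one_div_le_one_div_of_le (by norm_num)
    nlinarith
  have htv : tν ν = 1 - d := htν ν
  have hc0 : 0 ≤ c ν := by rw [hcv]; linarith
  have hc1 : c ν ≤ 1 := by rw [hcv]; linarith
  have hinv : 1 / (2 * Real.sqrt d) = ν := by rw [hsd]; field_simp
  have hYc : Y ν (c ν) = 1 - 1 / (2 * ν) := by
    rw [hYs, if_pos le_rfl, show (1 : ℝ) - c ν - d = d by rw [hcv]; ring, hsd]
  have hYc' : Y ν (c ν) = 1 + ν * (c ν - 1) := by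
    rw [hYc, hcv, hd]; field_simp; ring
  have hYdc : Yd ν (c ν) = ν := by
    rw [hYds, if_pos le_rfl, show (1 : ℝ) - c ν - d = d by rw [hcv]; ring, hinv]
  refine ⟨?_, ?_, ?_, ?_, ?_⟩
  · -- φ ν 0 ≤ 0
    rw [hφ, if_pos (by rw [htv]; linarith : (0:ℝ) ≤ tν ν), hcv, htv]
    linarith
  · -- strict mono
    intro a ha b hb hab
    rw [hφ ν a, hφ ν b]
    rcases le_or_gt b (tν ν) with h2 | h2
    · rw [if_pos (le_of_lt (lt_of_lt_of_le hab h2)), if_pos h2]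
      linarith
    · rw [if_neg (not_le.2 h2), hy b]
      have hsb : Real.sqrt (1 - b) < 1 / (2 * ν) := by
        rw [Real.sqrt_lt' (by positivity)]
        rw [htv] at h2
        have h5 : (1 / (2 * ν)) ^ 2 = d := by rw [hd]; field_simp; ring
        rw [h5]; linarith
      have e1 : (1 - Real.sqrt (1 - b) - 1) / ν = -(Real.sqrt (1 - b) / ν) := by ring
      rcases le_or_gt a (tν ν) with h1 | h1
      · rw [if_pos h1]
        have h4 : Real.sqrt (1 - b) / ν < (1 / (2 * ν)) / ν :=
          div_lt_div_of_pos_right hsb hν0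
        have e2 : (1 / (2 * ν)) / ν = 2 * d := by rw [hd]; field_simp; ring
        rw [e1]
        rw [hcv]
        rw [htv] at h1
        linarith
      · rw [if_neg (not_le.2 h1), hy a]
        have hsab : Real.sqrt (1 - b) < Real.sqrt (1 - a) :=
          Real.sqrt_lt_sqrt (by linarith [hb.2]) (by linarith)
        have h4 : Real.sqrt (1 - b) / ν < Real.sqrt (1 - a) / ν :=
          div_lt_div_of_pos_right hsab hν0
        have e2 : (1 - Real.sqrt (1 - a) - 1) / ν = -(Real.sqrt (1 - a) / ν) := by ring
        rw [e1, e2]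
        linarith
  · -- Lipschitz
    have hder : ∀ x ∈ Icc (0:ℝ) 1, HasDerivWithinAt (Y ν) (Yd ν x) (Icc (0:ℝ) 1) x := by
      intro x hx
      rcases lt_trichotomy x (c ν) with hlt | heq | hgt
      · have hne : (1 : ℝ) - x - d ≠ 0 := by
          have : x < 1 - 2 * d := hcv ▸ hlt
          intro h; nlinarith
        have h1 : HasDerivAt (Y ν) (Yd ν x) x := by
          rw [hYds x, if_pos hlt.le]
          apply (stmt17_deriv d x hne).congr_of_eventuallyEq
          filter_upwards [Iio_mem_nhds hlt] with s hs
          rw [hYs s, if_pos (le_of_lt hs)]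
        exact h1.hasDerivWithinAt
      · subst heq
        have hne : (1 : ℝ) - c ν - d ≠ 0 := by
          rw [hcv]; intro h; nlinarith
        have hval : 1 / (2 * Real.sqrt (1 - c ν - d)) = ν := by
          rw [show (1 : ℝ) - c ν - d = d by rw [hcv]; ring, hinv]
        have hL : HasDerivWithinAt (Y ν) ν (Iic (c ν)) (c ν) := by
          have h2 := (stmt17_deriv d (c ν) hne).hasDerivWithinAt (s := Iic (c ν))
          rw [hval] at h2
          exact h2.congr (fun s hs => by rw [hYs s, if_pos (mem_Iic.mp hs)])
            (by rw [hYs (c ν), if_pos le_rfl])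
        have hR : HasDerivWithinAt (Y ν) ν (Ici (c ν)) (c ν) := by
          have h2 : HasDerivAt (fun s : ℝ => 1 + ν * (s - 1)) ν (c ν) := by
            simpa using (((hasDerivAt_id (c ν)).sub_const 1).const_mul ν).const_add 1
          refine h2.hasDerivWithinAt.congr (fun s hs => ?_) hYc'
          rcases eq_or_lt_of_le (mem_Ici.mp hs) with he | hlt
          · rw [← he]; exact hYc'
          · rw [hYs s, if_neg (not_le.2 hlt)]
        have h3 := (hL.union hR).mono
          (by rw [Iic_union_Ici]; exact subset_univ _ : Icc (0:ℝ) 1 ⊆ Iic (c ν) ∪ Ici (c ν))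
        rw [hYdc]
        exact h3
      · have h2 : HasDerivAt (fun s : ℝ => 1 + ν * (s - 1)) ν x := by
          simpa using (((hasDerivAt_id x).sub_const 1).const_mul ν).const_add 1
        have h1 : HasDerivAt (Y ν) (Yd ν x) x := by
          rw [hYds x, if_neg (not_le.2 hgt)]
          apply h2.congr_of_eventuallyEq
          filter_upwards [Ioi_mem_nhds hgt] with s hs
          rw [hYs s, if_neg (not_le.2 hs)]
        exact h1.hasDerivWithinAt
    have hbound : ∀ x ∈ Icc (0:ℝ) 1, ‖Yd ν x‖₊ ≤ Real.toNNReal ν := by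
      intro x hx
      have h0 : 0 ≤ Yd ν x := by
        rw [hYds x]; split_ifs with h
        · positivity
        · linarith
      have h1 : Yd ν x ≤ ν := by
        rw [hYds x]; split_ifs with h
        · rw [← hinv]
          apply one_div_le_one_div_of_le (by positivity)
          have : d ≤ 1 - x - d := by
            have : x ≤ 1 - 2 * d := hcv ▸ h
            linarith
          have := Real.sqrt_le_sqrt this
          linarith
        · exact le_refl ν
      rw [← NNReal.coe_le_coe, coe_nnnorm, Real.coe_toNNReal _ hν0.le,
        Real.norm_eq_abs, abs_of_nonneg h0]
      exact h1
    exact (convex_Icc 0 1).lipschitzOnWith_of_nnnorm_hasDerivWithin_le hder hbound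
  · -- Y ν 1 = 1
    rw [hYs 1, if_neg (by rw [hcv]; intro h; nlinarith)]
    ring
  · -- a.e. inequality
    have h1 : ∀ᵐ s ∂(volume.restrict (Icc (0:ℝ) 1)), s ≠ 1 := by
      rw [ae_iff]
      have : {s : ℝ | ¬ s ≠ 1} = {1} := by ext s; simp
      rw [this, Measure.restrict_apply (measurableSet_singleton 1)]
      exact measure_mono_null inter_subset_left (measure_singleton 1)
    filter_upwards [h1, ae_restrict_mem measurableSet_Icc] with s hs1 hs2
    rcases le_or_gt s (c ν) with h | h
    · rw [hYds s, if_pos h, hYs s, if_pos h, hq]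
      rw [show (1 : ℝ) - (1 - Real.sqrt (1 - s - d)) = Real.sqrt (1 - s - d) by ring]
    · have hslt : s < 1 := lt_of_le_of_ne hs2.2 hs1
      rw [hYds s, if_neg (not_le.2 h), hYs s, if_neg (not_le.2 h), hq]
      rw [show (1 : ℝ) - (1 + ν * (s - 1)) = ν * (1 - s) by ring]
      have hpos : (0:ℝ) < 2 * (ν * (1 - s)) := by nlinarith
      rw [le_div_iff₀ hpos]
      have : 1 - s < 2 * d := by
        have : 1 - 2 * d < s := hcv ▸ h
        linarith
      rw [hd] at this
      have hd2 : (4 * ν ^ 2) * (1 / (4 * ν ^ 2)) = 1 := by field_simp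
      nlinarith [mul_lt_mul_of_pos_left this (show (0:ℝ) < 2 * ν ^ 2 by positivity), hd2]

lemma stmt17_part2 (y : ℝ → ℝ) (tν c : ℝ → ℝ) (Y Yd : ℝ → ℝ → ℝ)
    (hy : ∀ s, y s = 1 - Real.sqrt (1 - s))
    (htν : ∀ ν, tν ν = 1 - 1 / (4 * ν ^ 2))
    (hc : ∀ ν, c ν = 1 + (y (tν ν) - 1) / ν)
    (hY : ∀ ν s, Y ν s =
      if s ≤ c ν then y (s + tν ν - c ν) else 1 + ν * (s - 1))
    (hYd : ∀ ν s, Yd ν s =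
      if s ≤ c ν then 1 / (2 * Real.sqrt (1 - (s + tν ν - c ν))) else ν) :
    Tendsto (fun ν : ℝ =>
        ∫ s in (0:ℝ)..1,
          (|Y ν s - y s| + |Yd ν s - 1 / (2 * Real.sqrt (1 - s))|))
      atTop (nhds 0) := by
  have h5 : Tendsto (fun ν : ℝ => (5:ℝ) / ν) atTop (𝓝 0) :=
    tendsto_const_nhds.div_atTop tendsto_id
  refine tendsto_of_tendsto_of_tendsto_of_le_of_le' tendsto_const_nhds h5
    (Eventually.of_forall fun ν =>
      intervalIntegral.integral_nonneg (by norm_num) fun u _ => by positivity) ?_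
  filter_upwards [eventually_ge_atTop (1:ℝ)] with ν hν
  obtain ⟨hsd, hcv, hYs, hYds⟩ := stmt17_core y tν c Y Yd hy htν hc hY hYd ν hν
  have hν0 : (0 : ℝ) < ν := by linarith
  set d : ℝ := 1 / (4 * ν ^ 2) with hd
  have hd0 : 0 < d := by rw [hd]; positivity
  have hd4 : d ≤ 1 / 4 := by
    rw [hd]; apply one_div_le_one_div_of_le (by norm_num); nlinarith
  have hc0 : 0 ≤ c ν := by rw [hcv]; linarith
  have hc1 : c ν ≤ 1 := by rw [hcv]; linarith
  have hinv : 1 / (2 * Real.sqrt d) = ν := by rw [hsd]; field_simp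
  have hq12 : 1 / (2 * ν) ≤ 1 / ν := by
    apply one_div_le_one_div_of_le hν0; linarith
  have h2d : Real.sqrt (2 * d) ≤ 1 / ν := by
    have e : ((1:ℝ) / ν) ^ 2 = 1 / ν ^ 2 := by ring
    have h1 : 2 * d ≤ (1 / ν) ^ 2 := by
      rw [hd, e, show (2:ℝ) * (1 / (4 * ν ^ 2)) = 1 / (2 * ν ^ 2) by ring]
      apply one_div_le_one_div_of_le (by positivity); nlinarith
    calc Real.sqrt (2 * d) ≤ Real.sqrt ((1 / ν) ^ 2) := Real.sqrt_le_sqrt h1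
      _ = 1 / ν := Real.sqrt_sq (by positivity)
  have hYc : Y ν (c ν) = 1 - 1 / (2 * ν) := by
    rw [hYs, if_pos le_rfl, show (1 : ℝ) - c ν - d = d by rw [hcv]; ring, hsd]
  have hYc' : Y ν (c ν) = 1 + ν * (c ν - 1) := by
    rw [hYc, hcv, hd]; field_simp; ring
  have hYdc : Yd ν (c ν) = ν := by
    rw [hYds, if_pos le_rfl, show (1 : ℝ) - c ν - d = d by rw [hcv]; ring, hinv]
  have hycont : Continuous y := by
    rw [show y = fun s => 1 - Real.sqrt (1 - s) from funext hy]
    exact continuous_const.sub (Real.continuous_sqrt.comp (continuous_const.sub continuous_id))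
  -- integrability of 1/(2 sqrt(1-s)) on [c, 1]
  have hwint : IntervalIntegrable (fun s : ℝ => 1 / (2 * Real.sqrt (1 - s)))
      volume (c ν) 1 := by
    have h1 : IntervalIntegrable (fun x : ℝ => x ^ (-(1/2) : ℝ)) volume (1 - c ν) 0 :=
      intervalIntegral.intervalIntegrable_rpow' (by norm_num)
    have h2 := h1.comp_sub_left 1
    simp only [sub_sub_cancel, sub_zero] at h2
    have h3 := h2.const_mul (1/2 : ℝ)
    have h5 : (fun s : ℝ => 1 / (2 * Real.sqrt (1 - s)))
        = fun x : ℝ => (1/2) * (1 - x) ^ (-(1/2) : ℝ) :=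
      funext fun s => stmt17_inv_sqrt (1 - s)
    rw [h5]
    exact h3
  -- continuity facts
  have hsq1 : Continuous fun s : ℝ => Real.sqrt (1 - s - d) :=
    Real.continuous_sqrt.comp (by continuity)
  have hsq0 : Continuous fun s : ℝ => Real.sqrt (1 - s) :=
    Real.continuous_sqrt.comp (continuous_const.sub continuous_id)
  have hden1 : ∀ x ∈ Icc (0:ℝ) (c ν), 0 < Real.sqrt (1 - x - d) := by
    intro x hx
    have : x ≤ 1 - 2 * d := hcv ▸ hx.2
    exact Real.sqrt_pos.2 (by linarith)
  have hden0 : ∀ x ∈ Icc (0:ℝ) (c ν), 0 < Real.sqrt (1 - x) := by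
    intro x hx
    have : x ≤ 1 - 2 * d := hcv ▸ hx.2
    exact Real.sqrt_pos.2 (by linarith)
  have hF1cont : ContinuousOn (fun s : ℝ =>
      |(1 - Real.sqrt (1 - s - d)) - y s|
        + |1 / (2 * Real.sqrt (1 - s - d)) - 1 / (2 * Real.sqrt (1 - s))|)
      (Icc (0:ℝ) (c ν)) := by
    apply ContinuousOn.add
    · exact (((continuous_const.sub hsq1).sub hycont).abs).continuousOn
    · apply ContinuousOn.abs
      apply ContinuousOn.sub
      · exact continuousOn_const.div ((continuous_const.mul hsq1).continuousOn)
          (fun x hx => by have := hden1 x hx; positivity)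
      · exact continuousOn_const.div ((continuous_const.mul hsq0).continuousOn)
          (fun x hx => by have := hden0 x hx; positivity)
  have hF1int : IntervalIntegrable (fun s : ℝ =>
      |(1 - Real.sqrt (1 - s - d)) - y s|
        + |1 / (2 * Real.sqrt (1 - s - d)) - 1 / (2 * Real.sqrt (1 - s))|)
      volume 0 (c ν) :=
    (by rw [Set.uIcc_of_le hc0]; exact hF1cont : ContinuousOn _ (Set.uIcc 0 (c ν))).intervalIntegrable
  have hEq1 : ∀ s ∈ Icc (0:ℝ) (c ν),
      (|Y ν s - y s| + |Yd ν s - 1 / (2 * Real.sqrt (1 - s))|)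
        = |(1 - Real.sqrt (1 - s - d)) - y s|
          + |1 / (2 * Real.sqrt (1 - s - d)) - 1 / (2 * Real.sqrt (1 - s))| := by
    intro s hs
    rw [hYs s, hYds s, if_pos hs.2, if_pos hs.2]
  have hint1 : IntervalIntegrable (fun s : ℝ =>
      |Y ν s - y s| + |Yd ν s - 1 / (2 * Real.sqrt (1 - s))|) volume 0 (c ν) := by
    rw [intervalIntegrable_iff_integrableOn_Ioc_of_le hc0]
    exact ((intervalIntegrable_iff_integrableOn_Ioc_of_le hc0).mp hF1int).congr_fun
      (fun s hs => (hEq1 s (Ioc_subset_Icc_self hs)).symm) measurableSet_Ioc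
  have hEq2 : ∀ s ∈ Icc (c ν) 1,
      (|Y ν s - y s| + |Yd ν s - 1 / (2 * Real.sqrt (1 - s))|)
        = |(1 + ν * (s - 1)) - y s| + |ν - 1 / (2 * Real.sqrt (1 - s))| := by
    intro s hs
    rcases eq_or_lt_of_le hs.1 with he | hlt
    · rw [← he, hYc', hYdc]
    · rw [hYs s, hYds s, if_neg (not_le.2 hlt), if_neg (not_le.2 hlt)]
  have hF2int : IntervalIntegrable (fun s : ℝ =>
      |(1 + ν * (s - 1)) - y s| + |ν - 1 / (2 * Real.sqrt (1 - s))|)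
      volume (c ν) 1 := by
    apply IntervalIntegrable.add
    · exact (((continuous_const.add (continuous_const.mul
        (continuous_id.sub continuous_const))).sub hycont).abs).intervalIntegrable _ _
    · exact (intervalIntegrable_const.sub hwint).abs
  have hint2 : IntervalIntegrable (fun s : ℝ =>
      |Y ν s - y s| + |Yd ν s - 1 / (2 * Real.sqrt (1 - s))|) volume (c ν) 1 := by
    rw [intervalIntegrable_iff_integrableOn_Ioc_of_le hc1]
    exact ((intervalIntegrable_iff_integrableOn_Ioc_of_le hc1).mp hF2int).congr_fun
      (fun s hs => (hEq2 s (Ioc_subset_Icc_self hs)).symm) measurableSet_Ioc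
  -- split
  rw [← intervalIntegral.integral_add_adjacent_intervals hint1 hint2]
  have hI1 : (∫ s in (0:ℝ)..(c ν),
      (|Y ν s - y s| + |Yd ν s - 1 / (2 * Real.sqrt (1 - s))|))
      = ∫ s in (0:ℝ)..(c ν),
        (|(1 - Real.sqrt (1 - s - d)) - y s|
          + |1 / (2 * Real.sqrt (1 - s - d)) - 1 / (2 * Real.sqrt (1 - s))|) :=
    intervalIntegral.integral_congr (by rw [Set.uIcc_of_le hc0]; exact fun s hs => hEq1 s hs)
  have hI2 : (∫ s in (c ν)..1,
      (|Y ν s - y s| + |Yd ν s - 1 / (2 * Real.sqrt (1 - s))|))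
      = ∫ s in (c ν)..1,
        (|(1 + ν * (s - 1)) - y s| + |ν - 1 / (2 * Real.sqrt (1 - s))|) :=
    intervalIntegral.integral_congr (by rw [Set.uIcc_of_le hc1]; exact fun s hs => hEq2 s hs)
  rw [hI1, hI2]
  -- bound first piece
  have hG1cont : ContinuousOn (fun s : ℝ =>
      1 / ν + (1 / (2 * Real.sqrt (1 - s - d)) - 1 / (2 * Real.sqrt (1 - s))))
      (Icc (0:ℝ) (c ν)) := by
    apply ContinuousOn.add continuousOn_const
    apply ContinuousOn.sub
    · exact continuousOn_const.div ((continuous_const.mul hsq1).continuousOn)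
        (fun x hx => by have := hden1 x hx; positivity)
    · exact continuousOn_const.div ((continuous_const.mul hsq0).continuousOn)
        (fun x hx => by have := hden0 x hx; positivity)
  have hG1int : IntervalIntegrable (fun s : ℝ =>
      1 / ν + (1 / (2 * Real.sqrt (1 - s - d)) - 1 / (2 * Real.sqrt (1 - s))))
      volume 0 (c ν) :=
    (by rw [Set.uIcc_of_le hc0]; exact hG1cont : ContinuousOn _ (Set.uIcc 0 (c ν))).intervalIntegrable
  have hle1 : ∀ x ∈ Icc (0:ℝ) (c ν),
      |(1 - Real.sqrt (1 - x - d)) - y x|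
        + |1 / (2 * Real.sqrt (1 - x - d)) - 1 / (2 * Real.sqrt (1 - x))|
      ≤ 1 / ν + (1 / (2 * Real.sqrt (1 - x - d)) - 1 / (2 * Real.sqrt (1 - x))) := by
    intro x hx
    have hxc : x ≤ 1 - 2 * d := hcv ▸ hx.2
    have hb1 : Real.sqrt (1 - x - d) ≤ Real.sqrt (1 - x) := Real.sqrt_le_sqrt (by linarith)
    have hs1pos : 0 < Real.sqrt (1 - x - d) := Real.sqrt_pos.2 (by linarith)
    have ht1 : |(1 - Real.sqrt (1 - x - d)) - y x| ≤ 1 / ν := by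
      rw [hy x, show (1 - Real.sqrt (1 - x - d)) - (1 - Real.sqrt (1 - x))
        = Real.sqrt (1 - x) - Real.sqrt (1 - x - d) by ring, abs_of_nonneg (by linarith)]
      have h6 := stmt17_sqrt_add_le (1 - x - d) d (by linarith) hd0.le
      rw [show (1 - x - d) + d = 1 - x by ring, hsd] at h6
      linarith
    have ht2 : |1 / (2 * Real.sqrt (1 - x - d)) - 1 / (2 * Real.sqrt (1 - x))|
        = 1 / (2 * Real.sqrt (1 - x - d)) - 1 / (2 * Real.sqrt (1 - x)) := by
      apply abs_of_nonneg
      have := one_div_le_one_div_of_le (by linarith : (0:ℝ) < 2 * Real.sqrt (1 - x - d))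
        (by linarith : 2 * Real.sqrt (1 - x - d) ≤ 2 * Real.sqrt (1 - x))
      linarith
    rw [ht2]
    linarith
  have hA : ∀ x ∈ Set.uIcc (0:ℝ) (c ν),
      HasDerivAt (fun s : ℝ => s / ν + (Real.sqrt (1 - s) - Real.sqrt (1 - s - d)))
        (1 / ν + (1 / (2 * Real.sqrt (1 - x - d)) - 1 / (2 * Real.sqrt (1 - x)))) x := by
    rw [Set.uIcc_of_le hc0]
    intro x hx
    have hxc : x ≤ 1 - 2 * d := hcv ▸ hx.2
    have hne1 : (1:ℝ) - x ≠ 0 := (show (0:ℝ) < 1 - x by linarith).ne'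
    have hne2 : (1:ℝ) - x - d ≠ 0 := (show (0:ℝ) < 1 - x - d by linarith).ne'
    have h1 : HasDerivAt (fun s : ℝ => s / ν) (1 / ν) x := by
      simpa using (hasDerivAt_id x).div_const ν
    have h2 : HasDerivAt (fun s : ℝ => 1 - s) (-1) x := by
      simpa using (hasDerivAt_id x).const_sub 1
    have h3 := h2.sqrt hne1
    have h4 : HasDerivAt (fun s : ℝ => 1 - s - d) (-1) x := by
      simpa using ((hasDerivAt_id x).const_sub 1).sub_const d
    have h5 := h4.sqrt hne2
    have h6 := h1.add (h3.sub h5)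
    refine h6.congr_deriv ?_
    ring
  have hG1val := intervalIntegral.integral_eq_sub_of_hasDerivAt hA hG1int
  have hB1 : (∫ s in (0:ℝ)..(c ν),
      (1 / ν + (1 / (2 * Real.sqrt (1 - s - d)) - 1 / (2 * Real.sqrt (1 - s))))) ≤ 2 / ν := by
    rw [hG1val]
    simp only [zero_div, sub_zero, zero_add, Real.sqrt_one]
    rw [show (1:ℝ) - c ν - d = d by rw [hcv]; ring, show (1:ℝ) - c ν = 2 * d by rw [hcv]; ring]
    have e1 : c ν / ν ≤ 1 / ν := (div_le_div_iff_of_pos_right hν0).mpr hc1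
    have e2 : Real.sqrt (1 - d) ≤ 1 := Real.sqrt_le_one.mpr (by linarith)
    have e3 : 0 ≤ Real.sqrt d := Real.sqrt_nonneg d
    have e4 : (1:ℝ) / ν + 1 / ν = 2 / ν := by ring
    linarith [h2d]
  -- bound second piece
  have hG2int : IntervalIntegrable (fun s : ℝ =>
      (2 / ν + ν) + 1 / (2 * Real.sqrt (1 - s))) volume (c ν) 1 :=
    intervalIntegrable_const.add hwint
  have hle2 : ∀ x ∈ Icc (c ν) 1,
      |(1 + ν * (x - 1)) - y x| + |ν - 1 / (2 * Real.sqrt (1 - x))|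
      ≤ (2 / ν + ν) + 1 / (2 * Real.sqrt (1 - x)) := by
    intro x hx
    have hx1 : 1 - x ≤ 2 * d := by
      have := hcv ▸ hx.1
      linarith
    have hx2 : x ≤ 1 := hx.2
    have hsb : Real.sqrt (1 - x) ≤ 1 / ν :=
      le_trans (Real.sqrt_le_sqrt (by linarith)) h2d
    have hsnn : 0 ≤ Real.sqrt (1 - x) := Real.sqrt_nonneg _
    have hnb : ν * (1 - x) ≤ 1 / (2 * ν) := by
      have e : ν * (2 * d) = 1 / (2 * ν) := by rw [hd]; field_simp; ring
      nlinarith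
    have hnnn : 0 ≤ ν * (1 - x) := mul_nonneg hν0.le (by linarith)
    have ht1 : |(1 + ν * (x - 1)) - y x| ≤ 2 / ν := by
      rw [hy x, show (1 + ν * (x - 1)) - (1 - Real.sqrt (1 - x))
        = Real.sqrt (1 - x) - ν * (1 - x) by ring, abs_le]
      have h2ν : (1:ℝ) / ν ≤ 2 / ν := by
        rw [div_le_div_iff_of_pos_right hν0]; norm_num
      constructor <;> nlinarith
    have hw0 : 0 ≤ 1 / (2 * Real.sqrt (1 - x)) := by positivity
    have ht2 : |ν - 1 / (2 * Real.sqrt (1 - x))| ≤ ν + 1 / (2 * Real.sqrt (1 - x)) := by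
      rw [abs_le]; constructor <;> linarith
    linarith
  have hwd : ∀ x ∈ Ioo (c ν) 1,
      HasDerivAt (fun s : ℝ => -Real.sqrt (1 - s)) (1 / (2 * Real.sqrt (1 - x))) x :=
    fun x hx => stmt17_deriv2 x (show (0:ℝ) < 1 - x by linarith [hx.2]).ne'
  have hwcont : ContinuousOn (fun s : ℝ => -Real.sqrt (1 - s)) (Icc (c ν) 1) :=
    hsq0.neg.continuousOn
  have hwval := intervalIntegral.integral_eq_sub_of_hasDerivAt_of_le hc1 hwcont hwd hwint
  have hB2 : (∫ s in (c ν)..1,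
      ((2 / ν + ν) + 1 / (2 * Real.sqrt (1 - s)))) ≤ 3 / ν := by
    rw [intervalIntegral.integral_add intervalIntegrable_const hwint,
      intervalIntegral.integral_const, hwval, smul_eq_mul]
    simp only [sub_self, Real.sqrt_zero, neg_zero, zero_sub, sub_neg_eq_add, zero_add]
    rw [show (1:ℝ) - c ν = 2 * d by rw [hcv]; ring]
    have e2 : 2 * d * (2 / ν + ν) = 1 / ν ^ 3 + 1 / (2 * ν) := by
      rw [hd]; field_simp; ring
    have e3 : 1 / ν ^ 3 ≤ 1 / ν := by
      apply one_div_le_one_div_of_le hν0; nlinarith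
    have e5 : (1:ℝ) / ν + (1 / ν + 1 / ν) = 3 / ν := by ring
    linarith [h2d]
  have hM1 := intervalIntegral.integral_mono_on hc0 hF1int hG1int hle1
  have hM2 := intervalIntegral.integral_mono_on hc1 hF2int hG2int hle2
  have : (2:ℝ) / ν + 3 / ν = 5 / ν := by ring
  linarith

/-- Constructive Lipschitz approximation in Alberti's example: with
`y(s) = 1 − √(1−s)`, `q(z) = 1/(2(1−z))`, `t_ν = 1 − 1/(4ν²)` (so `y'(t_ν) = ν`),
`φ_ν(τ) = 1 + (y(τ)−1)/ν` on `[t_ν,1]` extended with slope `1` below, the function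
`y_ν` (`= y(s + t_ν − φ_ν(t_ν))` for `s ≤ φ_ν(t_ν)`, `= 1 + ν(s−1)` above) is
Lipschitz, satisfies `y_ν(1) = 1`, `y_ν' ≤ q(y_ν)` a.e., `φ_ν(0) ≤ 0`, `φ_ν` is
strictly increasing, and `y_ν → y` in `W^{1,1}([0,1])`. -/
theorem stmt17 (y q : ℝ → ℝ) (tν c : ℝ → ℝ) (φ Y Yd : ℝ → ℝ → ℝ)
    (hy : ∀ s, y s = 1 - Real.sqrt (1 - s))
    (hq : ∀ z, q z = 1 / (2 * (1 - z)))
    (htν : ∀ ν, tν ν = 1 - 1 / (4 * ν ^ 2))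
    (hc : ∀ ν, c ν = 1 + (y (tν ν) - 1) / ν)
    (hφ : ∀ ν τ, φ ν τ =
      if τ ≤ tν ν then c ν + τ - tν ν else 1 + (y τ - 1) / ν)
    (hY : ∀ ν s, Y ν s =
      if s ≤ c ν then y (s + tν ν - c ν) else 1 + ν * (s - 1))
    (hYd : ∀ ν s, Yd ν s =
      if s ≤ c ν then 1 / (2 * Real.sqrt (1 - (s + tν ν - c ν))) else ν) :
    (∀ ν : ℝ, 1 ≤ ν →
      φ ν 0 ≤ 0 ∧
      StrictMonoOn (φ ν) (Icc (0:ℝ) 1) ∧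
      LipschitzOnWith (Real.toNNReal ν) (Y ν) (Icc (0:ℝ) 1) ∧
      Y ν 1 = 1 ∧
      (∀ᵐ s ∂(volume.restrict (Icc (0:ℝ) 1)), Yd ν s ≤ q (Y ν s))) ∧
    Tendsto (fun ν : ℝ =>
        ∫ s in (0:ℝ)..1,
          (|Y ν s - y s| + |Yd ν s - 1 / (2 * Real.sqrt (1 - s))|))
      atTop (nhds 0) :=
  ⟨fun ν hν => stmt17_part1 y q tν c φ Y Yd hy hq htν hc hφ hY hYd ν hν,
   stmt17_part2 y tν c Y Yd hy htν hc hY hYd⟩
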